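/- For any circular binary word W of length n ≥ 4, the difference |W|_{0011} − |W|_{1100} equals the difference |W|_{1010} − |W|_{0101} (as integers). -/

import Mathlib

/-- Number of cyclic occurrences of the word `U` (of length `k`) in the circular
binary word `W` of length `n`. -/
def occ (n k : ℕ) [NeZero n] (W : ZMod n → Fin 2) (U : Fin k → Fin 2) : ℕ :=
  (Finset.univ.filter (fun i : ZMod n => ∀ j : Fin k, W (i + (j.val : ZMod n)) = U j)).card

/-- Telescoping weight: `-1` when at least two of the three bits are `1`. -/
def hw (a b c : Fin 2) : ℤ := if 2 ≤ a.val + b.val + c.val then -1 else 0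

lemma occ_eq_sum (n : ℕ) [NeZero n] (W : ZMod n → Fin 2) (U : Fin 4 → Fin 2) :
    (occ n 4 W U : ℤ) = ∑ i : ZMod n,
      (if W i = U 0 ∧ W (i + 1) = U 1 ∧ W (i + 2) = U 2 ∧ W (i + 3) = U 3
        then (1 : ℤ) else 0) := by
  rw [occ, Finset.card_filter]
  push_cast
  refine Finset.sum_congr rfl fun i _ => ?_
  refine if_congr ?_ rfl rfl
  constructor
  · intro h
    refine ⟨?_, ?_, ?_, ?_⟩
    · simpa using h 0
    · simpa using h 1
    · simpa using h 2
    · simpa using h 3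
  · rintro ⟨h0, h1, h2, h3⟩ j
    fin_cases j <;> simpa

theorem stmt_7 (n : ℕ) [NeZero n] (hn : 4 ≤ n) (W : ZMod n → Fin 2) :
    (occ n 4 W ![0,0,1,1] : ℤ) - occ n 4 W ![1,1,0,0]
      = (occ n 4 W ![1,0,1,0] : ℤ) - occ n 4 W ![0,1,0,1] := by
  have key : ∀ a b c d : Fin 2,
      ((if a = 0 ∧ b = 0 ∧ c = 1 ∧ d = 1 then (1 : ℤ) else 0)
        - (if a = 1 ∧ b = 1 ∧ c = 0 ∧ d = 0 then (1 : ℤ) else 0))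
      - ((if a = 1 ∧ b = 0 ∧ c = 1 ∧ d = 0 then (1 : ℤ) else 0)
        - (if a = 0 ∧ b = 1 ∧ c = 0 ∧ d = 1 then (1 : ℤ) else 0))
      = hw a b c - hw b c d := by decide
  rw [occ_eq_sum, occ_eq_sum, occ_eq_sum, occ_eq_sum]
  rw [← sub_eq_zero, ← Finset.sum_sub_distrib, ← Finset.sum_sub_distrib,
    ← Finset.sum_sub_distrib]
  have hU : ∀ i : ZMod n,
      (((if W i = (![0,0,1,1] : Fin 4 → Fin 2) 0 ∧ W (i + 1) = ![0,0,1,1] 1 ∧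
            W (i + 2) = ![0,0,1,1] 2 ∧ W (i + 3) = ![0,0,1,1] 3 then (1 : ℤ) else 0)
        - (if W i = (![1,1,0,0] : Fin 4 → Fin 2) 0 ∧ W (i + 1) = ![1,1,0,0] 1 ∧
            W (i + 2) = ![1,1,0,0] 2 ∧ W (i + 3) = ![1,1,0,0] 3 then (1 : ℤ) else 0))
        - ((if W i = (![1,0,1,0] : Fin 4 → Fin 2) 0 ∧ W (i + 1) = ![1,0,1,0] 1 ∧
            W (i + 2) = ![1,0,1,0] 2 ∧ W (i + 3) = ![1,0,1,0] 3 then (1 : ℤ) else 0)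
        - (if W i = (![0,1,0,1] : Fin 4 → Fin 2) 0 ∧ W (i + 1) = ![0,1,0,1] 1 ∧
            W (i + 2) = ![0,1,0,1] 2 ∧ W (i + 3) = ![0,1,0,1] 3 then (1 : ℤ) else 0)))
      = hw (W i) (W (i + 1)) (W (i + 2)) - hw (W (i + 1)) (W (i + 2)) (W (i + 3)) := by
    intro i
    have := key (W i) (W (i + 1)) (W (i + 2)) (W (i + 3))
    simp [Matrix.cons_val_zero, Matrix.cons_val_one, Matrix.head_cons]
    exact this
  rw [Finset.sum_congr rfl fun i _ => hU i]
  rw [Finset.sum_sub_distrib]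
  have shift : ∑ i : ZMod n, hw (W (i + 1)) (W (i + 2)) (W (i + 3))
      = ∑ i : ZMod n, hw (W i) (W (i + 1)) (W (i + 2)) := by
    refine Fintype.sum_equiv (Equiv.addRight (1 : ZMod n)) _ _ fun i => ?_
    simp only [Equiv.coe_addRight]
    have h2 : i + 1 + 1 = i + 2 := by ring
    have h3 : i + 1 + 2 = i + 3 := by ring
    rw [h2, h3]
  rw [shift, sub_self]
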